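/- If the likelihood L has a plateau of positive prior measure, i.e. there exists r ∈ ℝ with μ({x ∈ Ω : L(x) = r}) > 0, then the pushforward measure Φ_#μ is NOT the uniform distribution on [0,1] (i.e. Φ_#μ differs from Lebesgue measure restricted to [0,1]). -/

import Mathlib

open MeasureTheory Set

/-- The survival function `X(l) = mu {z : L z > l}` (as a real number). -/
noncomputable def survival {α : Type*} [MeasurableSpace α] (μ : Measure α) (L : α → ℝ)
    (lam : ℝ) : ℝ :=
  (μ {z | lam < L z}).toReal

/-- The generalized inverse `Ltilde (ξ) = sup {l ∈ range L : X l > ξ}`. -/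
noncomputable def genInv {α : Type*} [MeasurableSpace α] (μ : Measure α) (L : α → ℝ)
    (ξ : ℝ) : ℝ :=
  sSup {lam : ℝ | lam ∈ Set.range L ∧ ξ < survival μ L lam}

/-- The plateau mass `Δ(r) = μ {z : L z = r}` (as a real number). -/
noncomputable def plateau {α : Type*} [MeasurableSpace α] (μ : Measure α) (L : α → ℝ)
    (t : ℝ) : ℝ :=
  (μ {z | L z = t}).toReal

/-- The non-strict survival function `ψ(r) = μ {z : L z ≥ r}` (as a real number). -/
noncomputable def psi {α : Type*} [MeasurableSpace α] (μ : Measure α) (L : α → ℝ)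
    (t : ℝ) : ℝ :=
  (μ {z | t ≤ L z}).toReal

/-- If the likelihood L has a plateau of positive prior measure, then
the pushforward measure `Φ_#μ` is NOT the uniform distribution on [0,1]. -/
theorem pushforward_ne_uniform_of_plateau
    {d : ℕ} (Ω : Set (Fin d → ℝ)) (μ : Measure Ω) [IsProbabilityMeasure μ]
    (L : Ω → ℝ) (hL : Measurable L)
    (hbd : ∃ a b : ℝ, ∀ x, a ≤ L x ∧ L x ≤ b)
    (hplateau : ∃ t : ℝ, 0 < μ {x | L x = t}) :
    Measure.map (fun x => survival μ L (L x)) μ ≠ volume.restrict (Set.Icc (0:ℝ) 1) := by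
  obtain ⟨t, ht⟩ := hplateau
  intro heq
  have hanti : Antitone (survival μ L) := by
    intro a b hab
    exact ENNReal.toReal_mono (measure_ne_top μ _)
      (measure_mono (fun z hz => lt_of_le_of_lt hab hz))
  have hmeas : Measurable (fun x => survival μ L (L x)) := hanti.measurable.comp hL
  have h1 : Measure.map (fun x => survival μ L (L x)) μ {survival μ L t}
      = μ ((fun x => survival μ L (L x)) ⁻¹' {survival μ L t}) :=
    Measure.map_apply hmeas (measurableSet_singleton _)
  have h2 : 0 < Measure.map (fun x => survival μ L (L x)) μ {survival μ L t} := by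
    rw [h1]
    refine lt_of_lt_of_le ht (measure_mono ?_)
    intro x hx
    simp only [Set.mem_setOf_eq] at hx
    simp [hx]
  rw [heq, Measure.restrict_apply (measurableSet_singleton _)] at h2
  have h3 : volume ({survival μ L t} ∩ Set.Icc (0:ℝ) 1) = 0 :=
    le_antisymm (le_trans (measure_mono Set.inter_subset_left)
      (le_of_eq Real.volume_singleton)) zero_le
  rw [h3] at h2
  exact lt_irrefl _ h2
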